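/- For every positive integer k one has the two-sided bound (2^{2k}/√(πk)) · e^{−1/(6k)} < C(2k,k) < 2^{2k}/√(πk) for the central binomial coefficient. -/

import Mathlib

open Real Nat Filter Topology

noncomputable def cbRatio (k : ℕ) : ℝ := (Nat.centralBinom k : ℝ) * Real.sqrt k / 4 ^ k

lemma cbRatio_pos {k : ℕ} (hk : 0 < k) : 0 < cbRatio k := by
  have := Nat.centralBinom_pos k
  unfold cbRatio
  have : (0:ℝ) < (Nat.centralBinom k : ℝ) := by exact_mod_cast Nat.centralBinom_pos k
  have hks : (0:ℝ) < Real.sqrt k := Real.sqrt_pos.mpr (by exact_mod_cast hk)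
  positivity

lemma cbRatio_sq (k : ℕ) : cbRatio k ^ 2 = (Nat.centralBinom k : ℝ) ^ 2 * k / 16 ^ k := by
  unfold cbRatio
  rw [div_pow, mul_pow, Real.sq_sqrt (by positivity)]
  rw [← pow_mul, mul_comm k 2, pow_mul]
  norm_num

lemma cbRatio_sq_succ (k : ℕ) (hk : 0 < k) :
    cbRatio (k + 1) ^ 2 * (4 * k * (k + 1)) = cbRatio k ^ 2 * (2 * k + 1) ^ 2 := by
  have hrec : ((k : ℝ) + 1) * (Nat.centralBinom (k+1) : ℝ)
      = 2 * (2 * k + 1) * (Nat.centralBinom k : ℝ) := by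
    exact_mod_cast congrArg (Nat.cast : ℕ → ℝ) (Nat.succ_mul_centralBinom_succ k)
  rw [cbRatio_sq, cbRatio_sq]
  have h16 : (16:ℝ) ^ (k+1) = 16 * 16 ^ k := by ring
  have hk1 : ((k:ℝ)+1) ≠ 0 := by positivity
  have h16k : (16:ℝ) ^ k ≠ 0 := by positivity
  field_simp [h16]
  push_cast
  linear_combination (4 * 16 ^ k * (((k:ℝ)+1) * (Nat.centralBinom (k+1) : ℝ)
    + 2 * (2*(k:ℝ)+1) * (Nat.centralBinom k : ℝ))) * hrec

lemma cbRatio_eq_stirling (k : ℕ) (hk : 0 < k) :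
    cbRatio k = Stirling.stirlingSeq (2 * k) / Stirling.stirlingSeq k ^ 2 := by
  have hkR : (0:ℝ) < k := by exact_mod_cast hk
  have hfact : ((2 * k)! : ℝ) = (Nat.centralBinom k : ℝ) * (k ! : ℝ) ^ 2 := by
    have := Nat.choose_mul_factorial_mul_factorial (show k ≤ 2 * k by omega)
    rw [Nat.centralBinom_eq_two_mul_choose]
    have h2 : 2 * k - k = k := by omega
    rw [h2] at this
    push_cast [← this]
    ring
  unfold Stirling.stirlingSeq cbRatio
  have hsqrt4 : Real.sqrt (2 * (2 * k : ℕ) : ℝ) = 2 * Real.sqrt k := by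
    push_cast
    rw [show (2 : ℝ) * (2 * k) = 4 * k by ring, show (4 : ℝ) * k = 2^2 * k by norm_num,
      Real.sqrt_mul (by positivity), Real.sqrt_sq (by norm_num)]
  have hsqrt2 : Real.sqrt (2 * (k:ℕ) : ℝ) ^ 2 = 2 * k := by
    rw [Real.sq_sqrt (by positivity)]
  have hpow : ((2 * k : ℕ) / Real.exp 1 : ℝ) ^ (2 * k)
      = 4 ^ k * ((k / Real.exp 1 : ℝ) ^ k) ^ 2 := by
    push_cast
    rw [show ((2:ℝ) * k) / Real.exp 1 = 2 * (k / Real.exp 1) by ring, mul_pow,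
      show (2:ℝ)^(2*k) = 4^k by rw [pow_mul]; norm_num, ← pow_mul, mul_comm k 2]
  rw [hfact, hsqrt4, hpow]
  have he : ((k:ℝ) / Real.exp 1) ^ k ≠ 0 := by positivity
  have hf : ((k !:ℕ) : ℝ) ≠ 0 := by positivity
  have hs : Real.sqrt k ≠ 0 := by positivity
  have h2k' : Real.sqrt (2 * (k:ℝ)) = Real.sqrt 2 * Real.sqrt k :=
    Real.sqrt_mul (by norm_num) _
  rw [h2k']
  have h2 : Real.sqrt 2 ≠ 0 := by positivity
  field_simp
  ring_nf
  rw [Real.sq_sqrt (by norm_num : (0:ℝ) ≤ 2)]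

lemma tendsto_cbRatio :
    Tendsto cbRatio atTop (𝓝 (Real.sqrt π)⁻¹) := by
  have h2 : Tendsto (fun n : ℕ => 2 * n) atTop atTop :=
    tendsto_id.const_mul_atTop' two_pos
  have h1 : Tendsto (fun n : ℕ =>
      Stirling.stirlingSeq (2 * n) / Stirling.stirlingSeq n ^ 2) atTop
      (𝓝 (Real.sqrt π / Real.sqrt π ^ 2)) :=
    (Stirling.tendsto_stirlingSeq_sqrt_pi.comp h2).div
      (Stirling.tendsto_stirlingSeq_sqrt_pi.pow 2)
      (pow_ne_zero 2 (by positivity))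
  have heq : Real.sqrt π / Real.sqrt π ^ 2 = (Real.sqrt π)⁻¹ := by
    have : Real.sqrt π ≠ 0 := by positivity
    field_simp
  rw [heq] at h1
  refine h1.congr' (eventually_atTop.mpr ⟨1, fun n hn => ?_⟩) |>.congr (fun n => rfl)
  exact (cbRatio_eq_stirling n hn).symm

lemma cbRatio_lt_succ {k : ℕ} (hk : 0 < k) : cbRatio k < cbRatio (k + 1) := by
  have h := cbRatio_sq_succ k hk
  have hp := cbRatio_pos hk
  have hkR : (0:ℝ) < k := by exact_mod_cast hk
  have hM : (0:ℝ) < 4 * (k:ℝ) * (k + 1) := by positivity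
  have hsq : cbRatio k ^ 2 < cbRatio (k + 1) ^ 2 := by
    have h1 : cbRatio k ^ 2 * (4 * (k:ℝ) * (k + 1)) < cbRatio k ^ 2 * (2 * (k:ℝ) + 1) ^ 2 :=
      mul_lt_mul_of_pos_left (by nlinarith) (pow_pos hp 2)
    rw [← h] at h1
    exact lt_of_mul_lt_mul_right h1 hM.le
  exact lt_of_pow_lt_pow_left₀ 2 (cbRatio_pos k.succ_pos).le hsq

lemma cbRatio_mono {m n : ℕ} (hm : 0 < m) (h : m ≤ n) : cbRatio m ≤ cbRatio n := by
  induction n, h using Nat.le_induction with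
  | base => exact le_refl _
  | succ n hn ih => exact ih.trans (cbRatio_lt_succ (lt_of_lt_of_le hm hn)).le

lemma cbRatio_lt_lim {k : ℕ} (hk : 0 < k) : cbRatio k < (Real.sqrt π)⁻¹ := by
  have h1 : cbRatio (k + 1) ≤ (Real.sqrt π)⁻¹ :=
    ge_of_tendsto tendsto_cbRatio
      (eventually_atTop.mpr ⟨k + 1, fun n hn => cbRatio_mono k.succ_pos hn⟩)
  exact (cbRatio_lt_succ hk).trans_le h1

noncomputable def hseq (k : ℕ) : ℝ := cbRatio k * Real.exp (1 / (6 * k))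

lemma hseq_succ_lt {k : ℕ} (hk : 0 < k) : hseq (k + 1) < hseq k := by
  have hkR : (0:ℝ) < k := by exact_mod_cast hk
  have hp := cbRatio_pos hk
  have hp1 := cbRatio_pos k.succ_pos
  have hM : (0:ℝ) < 4 * (k:ℝ) * (k + 1) := by positivity
  set t : ℝ := 1 / (3 * (k:ℝ) * ((k:ℝ) + 1)) with ht_def
  have ht : 0 < t := by positivity
  have hexp3 : Real.exp (1 / (3 * (k:ℝ))) = Real.exp t * Real.exp (1 / (3 * ((k:ℝ) + 1))) := by
    rw [← Real.exp_add, ht_def]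
    congr 1
    field_simp
    ring
  have h1t : 1 + t < Real.exp t := by
    have := Real.add_one_lt_exp (ne_of_gt ht)
    linarith
  have hsq : hseq (k + 1) ^ 2 < hseq k ^ 2 := by
    unfold hseq
    rw [mul_pow, mul_pow, sq (Real.exp _), sq (Real.exp _), ← Real.exp_add, ← Real.exp_add]
    push_cast
    rw [show 1 / (6 * (k:ℝ)) + 1 / (6 * (k:ℝ)) = 1 / (3 * (k:ℝ)) by field_simp; ring,
      show 1 / (6 * ((k:ℝ)+1)) + 1 / (6 * ((k:ℝ)+1)) = 1 / (3 * ((k:ℝ)+1)) by field_simp; ring,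
      hexp3]
    have heq := cbRatio_sq_succ k hk
    have hexpp : 0 < Real.exp (1 / (3 * ((k:ℝ) + 1))) := Real.exp_pos _
    have htM : t * (4 * (k:ℝ) * ((k:ℝ) + 1)) = 4 / 3 := by
      rw [ht_def]
      field_simp
    have h2 : ((2:ℝ) * k + 1) ^ 2 < (1 + t) * (4 * (k:ℝ) * ((k:ℝ) + 1)) := by nlinarith [htM]
    have hB : cbRatio (k+1) ^ 2 * (4 * (k:ℝ) * ((k:ℝ) + 1))
        < cbRatio k ^ 2 * Real.exp t * (4 * (k:ℝ) * ((k:ℝ) + 1)) := by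
      rw [heq]
      have h5 := mul_le_mul_of_nonneg_left
        (mul_le_mul_of_nonneg_right h1t.le hM.le) (sq_nonneg (cbRatio k))
      have h6 : cbRatio k ^ 2 * (Real.exp t * (4 * (k:ℝ) * ((k:ℝ)+1)))
          = cbRatio k ^ 2 * Real.exp t * (4 * (k:ℝ) * ((k:ℝ)+1)) := by ring
      have h7 : cbRatio k ^ 2 * ((2:ℝ) * k + 1) ^ 2
          < cbRatio k ^ 2 * ((1 + t) * (4 * (k:ℝ) * ((k:ℝ)+1))) :=
        mul_lt_mul_of_pos_left h2 (pow_pos hp 2)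
      linarith
    have hBB : cbRatio (k+1) ^ 2 < cbRatio k ^ 2 * Real.exp t :=
      lt_of_mul_lt_mul_right hB hM.le
    calc cbRatio (k+1) ^ 2 * Real.exp (1 / (3 * ((k:ℝ)+1)))
        < cbRatio k ^ 2 * Real.exp t * Real.exp (1 / (3 * ((k:ℝ)+1))) :=
          mul_lt_mul_of_pos_right hBB hexpp
      _ = cbRatio k ^ 2 * (Real.exp t * Real.exp (1 / (3 * ((k:ℝ)+1)))) := by ring
  have hpos : 0 < hseq k := by
    unfold hseq
    positivity
  exact lt_of_pow_lt_pow_left₀ 2 hpos.le hsq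

lemma tendsto_hseq : Tendsto hseq atTop (𝓝 (Real.sqrt π)⁻¹) := by
  have h6 : Tendsto (fun n : ℕ => 6 * (n:ℝ)) atTop atTop :=
    tendsto_natCast_atTop_atTop.const_mul_atTop (by norm_num : (0:ℝ) < 6)
  have hinv : Tendsto (fun n : ℕ => 1 / (6 * (n:ℝ))) atTop (𝓝 0) :=
    h6.inv_tendsto_atTop.congr (fun n => (one_div _).symm)
  have hexp : Tendsto (fun n : ℕ => Real.exp (1 / (6 * (n:ℝ)))) atTop (𝓝 1) := by
    simpa [Function.comp_def] using (Real.continuous_exp.tendsto 0).comp hinv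
  have h := tendsto_cbRatio.mul hexp
  unfold hseq
  simpa only [mul_one] using h

lemma hseq_anti {m n : ℕ} (hm : 0 < m) (h : m ≤ n) : hseq n ≤ hseq m := by
  induction n, h using Nat.le_induction with
  | base => exact le_refl _
  | succ n hn ih => exact (hseq_succ_lt (lt_of_lt_of_le hm hn)).le.trans ih

lemma lim_lt_hseq {k : ℕ} (hk : 0 < k) : (Real.sqrt π)⁻¹ < hseq k := by
  have h1 : (Real.sqrt π)⁻¹ ≤ hseq (k + 1) :=
    le_of_tendsto tendsto_hseq
      (eventually_atTop.mpr ⟨k + 1, fun n hn => hseq_anti k.succ_pos hn⟩)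
  exact h1.trans_lt (hseq_succ_lt hk)

/-- For every positive integer `k` one has the two-sided bound
`(2^{2k}/√(πk)) e^{−1/(6k)} < C(2k,k) < 2^{2k}/√(πk)`. -/
theorem central_binomial_bounds (k : ℕ) (hk : 0 < k) :
    (2 : ℝ) ^ (2 * k) / Real.sqrt (Real.pi * k) * Real.exp (-1 / (6 * k)) <
        (Nat.choose (2 * k) k : ℝ) ∧
      (Nat.choose (2 * k) k : ℝ) < (2 : ℝ) ^ (2 * k) / Real.sqrt (Real.pi * k) := by
  have hkR : (0:ℝ) < k := by exact_mod_cast hk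
  have hchoose : ((2 * k).choose k : ℝ) = (Nat.centralBinom k : ℝ) := by
    rw [Nat.centralBinom_eq_two_mul_choose]
  have h4 : (2:ℝ) ^ (2 * k) = 4 ^ k := by rw [pow_mul]; norm_num
  have hπk : Real.sqrt (π * k) = Real.sqrt π * Real.sqrt k :=
    Real.sqrt_mul Real.pi_pos.le _
  have hsπ : (0:ℝ) < Real.sqrt π := Real.sqrt_pos.mpr Real.pi_pos
  have hsk : (0:ℝ) < Real.sqrt k := Real.sqrt_pos.mpr hkR
  constructor
  · -- lower bound
    have h := lim_lt_hseq hk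
    unfold hseq cbRatio at h
    -- h : (√π)⁻¹ < CB * √k / 4^k * exp (1/(6k))
    rw [hchoose, h4, hπk, neg_div, Real.exp_neg, div_mul_eq_mul_div,
      div_lt_iff₀ (by positivity)]
    -- goal : 4^k * (exp (1/(6k)))⁻¹ < CB * (√π * √k)
    have hmul := mul_lt_mul_of_pos_right h
      (show (0:ℝ) < 4 ^ k * Real.sqrt π * (Real.exp (1 / (6 * (k:ℝ))))⁻¹ by positivity)
    have e1 : (Real.sqrt π)⁻¹ * (4 ^ k * Real.sqrt π * (Real.exp (1 / (6 * (k:ℝ))))⁻¹)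
        = 4 ^ k * (Real.exp (1 / (6 * (k:ℝ))))⁻¹ := by
      field_simp
    have e2 : (Nat.centralBinom k : ℝ) * Real.sqrt k / 4 ^ k * Real.exp (1 / (6 * (k:ℝ)))
        * (4 ^ k * Real.sqrt π * (Real.exp (1 / (6 * (k:ℝ))))⁻¹)
        = (Nat.centralBinom k : ℝ) * (Real.sqrt π * Real.sqrt k) := by
      have : Real.exp (1 / (6 * (k:ℝ))) ≠ 0 := (Real.exp_pos _).ne'
      field_simp
    rw [e1, e2] at hmul
    exact hmul
  · -- upper bound
    have h := cbRatio_lt_lim hk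
    unfold cbRatio at h
    rw [hchoose, h4, hπk, lt_div_iff₀ (by positivity)]
    have hmul := mul_lt_mul_of_pos_right h
      (show (0:ℝ) < 4 ^ k * Real.sqrt π by positivity)
    have e1 : (Real.sqrt π)⁻¹ * (4 ^ k * Real.sqrt π) = 4 ^ k := by field_simp
    have e2 : (Nat.centralBinom k : ℝ) * Real.sqrt k / 4 ^ k * (4 ^ k * Real.sqrt π)
        = (Nat.centralBinom k : ℝ) * (Real.sqrt π * Real.sqrt k) := by
      field_simp
    rw [e1, e2] at hmul
    exact hmul
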